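/- Let φ and ψ be finite potent endomorphisms of a k-vector space V that commute, φ∘ψ = ψ∘φ. Let A ⊆ End_k(V) be the unital k-subalgebra generated by φ and ψ, and let F = φ∘A + ψ∘A = {φ∘a + ψ∘b : a, b ∈ A}. Then F is a finite potent subspace of End_k(V). -/

import Mathlib

/-- A subspace `F ⊆ End_k(V)` is a *finite potent subspace* if there is `n ≥ 1` such that
any composition of `n` elements of `F` has finite-dimensional image. -/
def IsFinitePotentSubspace {k V : Type*} [Field k] [AddCommGroup V] [Module k V]
    (F : Submodule k (V →ₗ[k] V)) : Prop :=
  ∃ n : ℕ, 1 ≤ n ∧ ∀ f : Fin n → (V →ₗ[k] V), (∀ i, f i ∈ F) →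
    FiniteDimensional k (LinearMap.range (List.ofFn f).prod)

/-- if `φ`, `ψ` are commuting finite potent endomorphisms, and `A` is the
unital subalgebra of `End_k(V)` generated by `φ` and `ψ`, then `F = φ∘A + ψ∘A` is a
finite potent subspace of `End_k(V)`. -/
theorem isFinitePotentSubspace_of_commute
    {k V : Type*} [Field k] [AddCommGroup V] [Module k V]
    (φ ψ : V →ₗ[k] V)
    (hφ : ∃ n : ℕ, 1 ≤ n ∧ FiniteDimensional k (LinearMap.range (φ ^ n)))
    (hψ : ∃ n : ℕ, 1 ≤ n ∧ FiniteDimensional k (LinearMap.range (ψ ^ n)))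
    (hcomm : φ * ψ = ψ * φ)
    (A : Subalgebra k (V →ₗ[k] V)) (hA : A = Algebra.adjoin k {φ, ψ})
    (F : Submodule k (V →ₗ[k] V))
    (hF : F = Submodule.map (LinearMap.mulLeft k φ) (Subalgebra.toSubmodule A)
            ⊔ Submodule.map (LinearMap.mulLeft k ψ) (Subalgebra.toSubmodule A)) :
    IsFinitePotentSubspace F := by
  obtain ⟨n, hn, hφn⟩ := hφ
  obtain ⟨m, hm, hψm⟩ := hψ
  have hφψ : Commute φ ψ := hcomm
  -- every element of A commutes with φ and with ψ
  have hAφ : ∀ a ∈ A, Commute φ a := by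
    intro a ha
    rw [hA] at ha
    refine Algebra.commute_of_mem_adjoin_of_forall_mem_commute ha ?_
    intro b hb
    have hb' : b = φ ∨ b = ψ := by simpa using hb
    rcases hb' with h | h <;> rw [h]
    exacts [Commute.refl φ, hφψ]
  have hAψ : ∀ a ∈ A, Commute ψ a := by
    intro a ha
    rw [hA] at ha
    refine Algebra.commute_of_mem_adjoin_of_forall_mem_commute ha ?_
    intro b hb
    have hb' : b = φ ∨ b = ψ := by simpa using hb
    rcases hb' with h | h <;> rw [h]
    exacts [hφψ.symm, Commute.refl ψ]
  -- the target finite-dimensional subspace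
  set W : Submodule k V := LinearMap.range (φ ^ n) ⊔ LinearMap.range (ψ ^ m) with hW
  haveI : FiniteDimensional k W := Submodule.finiteDimensional_sup _ _
  -- filtration
  set G : ℕ → Set (V →ₗ[k] V) :=
    fun j => {x | ∃ r s a, a ∈ A ∧ r + s = j ∧ x = φ ^ r * ψ ^ s * a} with hG
  set P : ℕ → Submodule k (V →ₗ[k] V) := fun j => Submodule.span k (G j) with hP
  -- key rearrangement
  have hmove : ∀ c ∈ A, ∀ r s : ℕ, ∀ a : V →ₗ[k] V,
      c * (φ ^ r * ψ ^ s * a) = φ ^ r * ψ ^ s * (c * a) := by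
    intro c hc r s a
    have h1 : c * φ ^ r = φ ^ r * c := ((hAφ c hc).symm.pow_right r).eq
    have h2 : c * ψ ^ s = ψ ^ s * c := ((hAψ c hc).symm.pow_right s).eq
    calc c * (φ ^ r * ψ ^ s * a) = c * φ ^ r * ψ ^ s * a := by
          simp only [mul_assoc]
      _ = φ ^ r * c * ψ ^ s * a := by rw [h1]
      _ = φ ^ r * ψ ^ s * c * a := by
          rw [mul_assoc (φ ^ r) c (ψ ^ s), h2, ← mul_assoc (φ ^ r) (ψ ^ s) c]
      _ = φ ^ r * ψ ^ s * (c * a) := by rw [mul_assoc]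
  -- multiplication step
  have hstep : ∀ f ∈ F, ∀ j : ℕ, ∀ x ∈ P j, f * x ∈ P (j + 1) := by
    intro f hf j x hx
    rw [hF] at hf
    obtain ⟨y, hy, z, hz, rfl⟩ := Submodule.mem_sup.mp hf
    obtain ⟨a, ha, rfl⟩ := hy
    obtain ⟨b, hb, rfl⟩ := hz
    simp only [SetLike.mem_coe, Subalgebra.mem_toSubmodule] at ha hb
    simp only [LinearMap.mulLeft_apply]
    have main : ∀ (c : V →ₗ[k] V), c ∈ A → ∀ (θ : V →ₗ[k] V),
        θ = φ ∨ θ = ψ → θ * c * x ∈ P (j + 1) := by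
      intro c hc θ hθ
      induction hx using Submodule.span_induction with
      | mem u hu =>
          obtain ⟨r, s, a', ha', hrs, rfl⟩ := hu
          have : θ * c * (φ ^ r * ψ ^ s * a') = θ * (φ ^ r * ψ ^ s * (c * a')) := by
            rw [mul_assoc θ c, hmove c hc]
          rw [this]
          rcases hθ with h | h <;> rw [h]
          · refine Submodule.subset_span ⟨r + 1, s, c * a', A.mul_mem hc ha', by omega, ?_⟩
            rw [pow_succ']
            simp only [mul_assoc]
          · refine Submodule.subset_span ⟨r, s + 1, c * a', A.mul_mem hc ha', by omega, ?_⟩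
            have hcψ : ψ * φ ^ r = φ ^ r * ψ := ((hφψ.symm.pow_right r).eq)
            calc ψ * (φ ^ r * ψ ^ s * (c * a')) = ψ * φ ^ r * (ψ ^ s * (c * a')) := by
                  simp only [mul_assoc]
              _ = φ ^ r * (ψ * ψ ^ s) * (c * a') := by rw [hcψ]; simp only [mul_assoc]
              _ = φ ^ r * ψ ^ (s + 1) * (c * a') := by rw [← pow_succ']
      | zero => simp only [mul_zero]; exact (P (j + 1)).zero_mem
      | add u v hu hv hu' hv' =>
          rw [mul_add]
          exact (P (j + 1)).add_mem hu' hv'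
      | smul t u hu hu' =>
          rw [mul_smul_comm]
          exact (P (j + 1)).smul_mem t hu'
    rw [add_mul]
    exact (P (j + 1)).add_mem (main a ha φ (Or.inl rfl)) (main b hb ψ (Or.inr rfl))
  -- products of elements of F
  have hprod : ∀ l : List (V →ₗ[k] V), (∀ x ∈ l, x ∈ F) → l.prod ∈ P l.length := by
    intro l
    induction l with
    | nil =>
        intro _
        simp only [List.prod_nil, List.length_nil]
        exact Submodule.subset_span ⟨0, 0, 1, A.one_mem, rfl, by simp⟩
    | cons f l ih =>
        intro hl
        simp only [List.prod_cons, List.length_cons]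
        exact hstep f (hl f (List.mem_cons_self)) l.length
          l.prod (ih fun x hx => hl x (List.mem_cons_of_mem f hx))
  -- elements of P (n + m) map V into W
  have hPW : ∀ x ∈ P (n + m), ∀ v : V, x v ∈ W := by
    intro x hx v
    induction hx using Submodule.span_induction with
    | mem u hu =>
        obtain ⟨r, s, a, ha, hrs, rfl⟩ := hu
        rcases le_or_gt n r with h | h
        · obtain ⟨r', rfl⟩ : ∃ r', r = n + r' := ⟨r - n, by omega⟩
          have : φ ^ (n + r') * ψ ^ s * a = φ ^ n * (φ ^ r' * (ψ ^ s * a)) := by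
            rw [pow_add]; simp only [mul_assoc]
          rw [this]
          simp only [Module.End.mul_apply]
          exact le_sup_left (α := Submodule k V) (LinearMap.mem_range_self _ _)
        · obtain ⟨s', rfl⟩ : ∃ s', s = m + s' := ⟨s - m, by omega⟩
          have hswap : φ ^ r * ψ ^ (m + s') = ψ ^ (m + s') * φ ^ r :=
            ((hφψ.pow_left r).pow_right (m + s')).eq
          have : φ ^ r * ψ ^ (m + s') * a = ψ ^ m * (ψ ^ s' * (φ ^ r * a)) := by
            rw [hswap, pow_add]; simp only [mul_assoc]
          rw [this]
          simp only [Module.End.mul_apply]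
          exact le_sup_right (α := Submodule k V) (LinearMap.mem_range_self _ _)
    | zero => simp only [LinearMap.zero_apply]; exact W.zero_mem
    | add u w hu hw hu' hw' =>
        rw [LinearMap.add_apply]
        exact W.add_mem hu' hw'
    | smul t u hu hu' =>
        rw [LinearMap.smul_apply]
        exact W.smul_mem t hu'
  refine ⟨n + m, by omega, fun f hf => ?_⟩
  have hmem : (List.ofFn f).prod ∈ P (n + m) := by
    have := hprod (List.ofFn f) (by
      intro x hx
      obtain ⟨i, rfl⟩ := List.mem_ofFn.mp hx
      exact hf i)
    simpa using this
  have hle : LinearMap.range (List.ofFn f).prod ≤ W := by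
    rintro _ ⟨v, rfl⟩
    exact hPW _ hmem v
  exact Submodule.finiteDimensional_of_le hle
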